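/- Let (ω_j) be a strictly increasing sequence of positive reals and (c_j) a square-summable sequence with Σ c_j²/ω_j < ∞. If λ ∈ ℂ satisfies γλ Σ_{j=1}^∞ c_j²/(ω_j² + λ²) + 1 = 0 for some γ > 0 (equivalently Σ (c_j²/ω_j)(1/(λ−iω_j) − 1/(λ+iω_j)) + 2i/(γλ) = 0), then λ is not purely imaginary, i.e. Re λ ≠ 0. -/

import Mathlib

open Complex

/-- A root of the characteristic equation is not purely imaginary. -/
theorem stmt_0 (ω c : ℕ → ℝ) (hω : StrictMono ω) (hωpos : ∀ j, 0 < ω j)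
    (hc2 : Summable (fun j => (c j) ^ 2))
    (hcω : Summable (fun j => (c j) ^ 2 / ω j))
    (γ : ℝ) (hγ : 0 < γ) (z : ℂ) (hz0 : z ≠ 0)
    (hzω : ∀ j, z ≠ Complex.I * (ω j : ℂ) ∧ z ≠ -(Complex.I * (ω j : ℂ)))
    (heq : (γ : ℂ) * z * (∑' j, ((c j : ℂ) ^ 2 / ((ω j : ℂ) ^ 2 + z ^ 2))) + 1 = 0) :
    z.re ≠ 0 := by
  intro hre
  set y := z.im with hy
  have hz : z = (y : ℂ) * Complex.I := by
    apply Complex.ext <;> simp [hre, hy]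
  have hf : ∀ j, (c j : ℂ) ^ 2 / ((ω j : ℂ) ^ 2 + z ^ 2)
      = (((c j) ^ 2 / ((ω j) ^ 2 - y ^ 2) : ℝ) : ℂ) := by
    intro j
    rw [hz]
    have hden : ((ω j : ℂ) ^ 2 + ((y : ℂ) * Complex.I) ^ 2)
        = ((((ω j) ^ 2 - y ^ 2 : ℝ)) : ℂ) := by
      push_cast
      ring_nf
      rw [Complex.I_sq]
      ring
    rw [hden]
    push_cast
    ring
  rw [tsum_congr hf] at heq
  have hS : (∑' j, (((c j) ^ 2 / ((ω j) ^ 2 - y ^ 2) : ℝ) : ℂ))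
      = (((∑' j, (c j) ^ 2 / ((ω j) ^ 2 - y ^ 2) : ℝ)) : ℂ) := by
    by_cases h : Summable (fun j => (c j) ^ 2 / ((ω j) ^ 2 - y ^ 2))
    · exact (Complex.ofReal_tsum _).symm
    · rw [tsum_eq_zero_of_not_summable h, tsum_eq_zero_of_not_summable]
      · simp
      · intro hs
        exact h ((Complex.summable_ofReal).mp hs)
  rw [hS] at heq
  have := congrArg Complex.re heq
  simp [hre] at this
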